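/- Let R be an associative algebra over ℚ (not necessarily commutative) with unit and let θ₁, θ₂, θ₃, … ∈ R. For a composition J = (j₁, …, j_m) of a positive integer, set c(J) := Π_{s=1}^{m}(j₁ + ⋯ + j_s)^{-1} ∈ ℚ and θ_J := θ_{j₁}·⋯·θ_{j_m} ∈ R. Define g₀ = 1, g_n := Σ_{J composition of n} c(J)·θ_J for n ≥ 1, and h_n := Σ_{(i₁,…,i_l) composition of n} (−1)^l·g_{i₁}⋯g_{i_l} (with h₀ = 1). Then for every i ≥ 0 and j ≥ 1, Σ_{n=j}^{i+j} h_{i+j−n}·g_n = Σ over all compositions I of i+j of C(I)·θ_I, where C(I) := Σ over all ways of writing I as a concatenation I = I₁⁀I₂⁀⋯⁀I_m of nonempty compositions with the total of the last block |I_m| ≥ j, of (−1)^{m+1}·c(I₁)·c(I₂)·⋯·c(I_m). -/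

import Mathlib

/-- For a list `l = (j₁, …, j_m)` of positive integers (the blocks of a composition),
`cList l = Π_{s=1}^{m} (j₁ + ⋯ + j_s)⁻¹ ∈ ℚ`. -/
def cListQ (l : List ℕ) : ℚ :=
  ∏ s ∈ Finset.range l.length, (((l.take (s + 1)).sum : ℚ))⁻¹

/-- The coefficients `g_n = Σ_{J composition of n} c(J)·θ_J` (with `g_0 = 1`) of the solution
of `g₊' = g₊·θ`, `g₊(0) = 1`. -/
noncomputable def solnCoeff {R : Type*} [Ring R] [Algebra ℚ R] (θ : ℕ → R) : ℕ → R := fun n =>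
  if n = 0 then 1
  else ∑ J : Composition n, cListQ J.blocks • (J.blocks.map θ).prod

/-- The coefficients of the formal inverse of `Σ g_n zⁿ`:
`h_0 = 1` and `h_n = Σ_{(i₁,…,i_l) composition of n} (−1)^l · g_{i₁}⋯g_{i_l}`. -/
noncomputable def invCoeff {R : Type*} [Ring R] (g : ℕ → R) : ℕ → R := fun n =>
  if n = 0 then 1
  else ∑ I : Composition n, (-1 : R) ^ I.length * (I.blocks.map g).prod

open List in
lemma splitAux_append {α : Type*} (ns : List ℕ) (xs ys : List α) (h : ns.sum = xs.length) :
    (xs ++ ys).splitWrtCompositionAux (ns ++ [ys.length]) =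
      xs.splitWrtCompositionAux ns ++ [ys] := by
  induction ns generalizing xs with
  | nil =>
    have : xs = [] := by
      have : xs.length = 0 := by simpa using h.symm
      simpa using this
    subst this
    simp [splitWrtCompositionAux]
  | cons n ns ih =>
    have hsum : ns.sum = (xs.drop n).length := by simp at h ⊢; omega
    have hn : n ≤ xs.length := by simp at h; omega
    rw [cons_append, splitWrtCompositionAux_cons, splitWrtCompositionAux_cons,
      take_append_of_le_length hn, drop_append_of_le_length hn, ih _ hsum, cons_append]

lemma getLastD_of_ne_nil {α : Type*} (l : List α) (h : l ≠ []) (d : α) :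
    l.getLastD d = l.getLast h := by
  rw [List.getLastD_eq_getLast?, List.getLast?_eq_getLast h]
  rfl

lemma getLast_map' {α β : Type*} (f : α → β) (l : List α) (h : l ≠ []) :
    (l.map f).getLast (by simpa using h) = f (l.getLast h) := by
  induction l with
  | nil => simp at h
  | cons a l ih =>
    cases l with
    | nil => simp
    | cons b l => simp only [List.map_cons, List.getLast_cons (by simp : (b::l).map f ≠ []),
        List.getLast_cons (List.cons_ne_nil b l)] at *; exact ih (by simp)

lemma ofFn_map_eq {α β : Type*} {n : ℕ} (l : List α) (h : l.length = n) (F : α → β)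
    (f : Fin n → β) (hf : ∀ (k : ℕ) (hk : k < n), f ⟨k, hk⟩ = F (l[k]'(by omega))) :
    (List.ofFn f) = l.map F := by
  subst h
  apply List.ext_getElem (by simp)
  intro k h1 h2
  simp only [List.getElem_ofFn, List.getElem_map]
  exact hf k (by simpa using h1)

lemma prod_ofFn_sum {R : Type*} [Semiring R] : ∀ {n : ℕ} (T : Fin n → Type) [∀ i, Fintype (T i)]
    (t : ∀ i, T i → R),
    (List.ofFn fun i => ∑ x : T i, t i x).prod
      = ∑ b : ∀ i, T i, (List.ofFn fun i => t i (b i)).prod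
  | 0, T, _, t => by simp
  | n + 1, T, _, t => by
    rw [List.ofFn_succ, List.prod_cons,
      prod_ofFn_sum (fun i => T i.succ) (fun i x => t i.succ x), Finset.sum_mul_sum]
    rw [← Fintype.sum_prod_type']
    refine Fintype.sum_equiv (Fin.consEquiv T) _ _ fun p => ?_
    rw [List.ofFn_succ, List.prod_cons]
    simp [Fin.consEquiv]

lemma prod_ofFn_smul {R : Type*} [Ring R] [Algebra ℚ R] : ∀ {n : ℕ} (q : Fin n → ℚ) (r : Fin n → R),
    (List.ofFn fun i => q i • r i).prod = (∏ i, q i) • (List.ofFn r).prod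
  | 0, q, r => by simp
  | n + 1, q, r => by
    rw [List.ofFn_succ, List.prod_cons, prod_ofFn_smul _ _, List.ofFn_succ, List.prod_cons,
      smul_mul_smul_comm, Fin.prod_univ_succ]

lemma qsmul_eq_neg_pow {R : Type*} [Ring R] [Algebra ℚ R] (k : ℕ) (x : R) :
    ((-1 : ℚ) ^ k) • x = (-1 : R) ^ k * x := by
  rw [Algebra.smul_def, map_pow, map_neg, map_one]

lemma comp_blocks_nil (c : Composition 0) : c.blocks = [] := by
  cases hc : c.blocks with
  | nil => rfl
  | cons a l =>
    have hs := c.blocks_sum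
    have ha := c.blocks_pos (hc ▸ (List.mem_cons_self : a ∈ a :: l))
    rw [hc] at hs
    simp at hs
    omega

instance : Unique (Composition 0) where
  default := ⟨[], by simp, rfl⟩
  uniq c := by
    ext1
    rw [comp_blocks_nil c]

lemma comp_length_pos {n : ℕ} (c : Composition n) (hn : 1 ≤ n) : 0 < c.length := by
  rcases hc : c.blocks with _ | ⟨a, l⟩
  · have := c.blocks_sum
    rw [hc] at this
    simp at this
    omega
  · simp [Composition.length, hc]

instance : Unique (Σ I : Composition 0, Composition I.length) where
  default := ⟨⟨[], by simp, rfl⟩, ⟨[], by simp, rfl⟩⟩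
  uniq p := by
    obtain ⟨I, c⟩ := p
    have hI : I.blocks = [] := comp_blocks_nil I
    have hlen : I.length = 0 := by simp [Composition.length, hI]
    have hc : c.blocks = [] := by
      have hs := c.blocks_sum
      cases hcb : c.blocks with
      | nil => rfl
      | cons a l =>
        have ha := c.blocks_pos (hcb ▸ (List.mem_cons_self : a ∈ a :: l))
        rw [hcb] at hs
        simp at hs
        omega
    have hI' : I = (⟨[], by simp, rfl⟩ : Composition 0) := by ext1; simpa using hI
    subst hI'
    have hc' : c = (⟨[], by simp, rfl⟩ :
        Composition (Composition.length ⟨[], by simp, rfl⟩)) := by ext1; simpa using hc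
    rw [hc']

lemma invCoeff_solnCoeff_eq {R : Type*} [Ring R] [Algebra ℚ R] (θ : ℕ → R) (m : ℕ) :
    invCoeff (solnCoeff θ) m =
      ∑ p : Σ I : Composition m, Composition I.length,
        ((-1 : ℚ) ^ p.2.length * ((p.1.blocks.splitWrtComposition p.2).map cListQ).prod)
          • (p.1.blocks.map θ).prod := by
  rcases Nat.eq_zero_or_pos m with hm | hm
  · subst hm
    have key : ∀ p : (Σ I : Composition 0, Composition I.length),
        ((-1 : ℚ) ^ p.2.length * ((p.1.blocks.splitWrtComposition p.2).map cListQ).prod)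
            • ((p.1.blocks.map θ).prod) = 1 := by
      rintro ⟨I, c⟩
      have hI : I.blocks = [] := comp_blocks_nil I
      have hc : c.blocks = [] := by
        have hs := c.blocks_sum
        have hlen : I.length = 0 := by simp [Composition.length, hI]
        cases hcb : c.blocks with
        | nil => rfl
        | cons a l =>
          have ha := c.blocks_pos (hcb ▸ (List.mem_cons_self : a ∈ a :: l))
          rw [hcb] at hs
          simp [hlen] at hs
          omega
      simp [hI, hc, List.splitWrtComposition, List.splitWrtCompositionAux,
        Composition.length]
    simp [key, invCoeff]
  · have hm0 : m ≠ 0 := hm.ne'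
    rw [invCoeff, if_neg hm0]
    have term : ∀ K : Composition m,
        (-1 : R) ^ K.length * (K.blocks.map (solnCoeff θ)).prod
          = ∑ b : ∀ i : Fin K.length, Composition (K.blocksFun i),
              ((-1 : ℚ) ^ K.length * ∏ i, cListQ (b i).blocks)
                • (List.ofFn fun i => (((b i).blocks.map θ).prod)).prod := by
      intro K
      have h1 : K.blocks.map (solnCoeff θ)
          = List.ofFn fun i => ∑ J : Composition (K.blocksFun i),
              cListQ J.blocks • (J.blocks.map θ).prod := by
        rw [← Composition.ofFn_blocksFun, List.map_ofFn]
        refine congrArg _ (funext fun i => ?_)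
        have hKi : K.blocksFun i ≠ 0 :=
          (K.blocks_pos (K.blocksFun_mem_blocks i)).ne'
        simp only [Function.comp, solnCoeff, if_neg hKi]
      rw [h1, prod_ofFn_sum, Finset.mul_sum]
      refine Finset.sum_congr rfl fun b _ => ?_
      rw [prod_ofFn_smul, ← qsmul_eq_neg_pow, smul_smul]
    calc
      ∑ K : Composition m, (-1 : R) ^ K.length * (K.blocks.map (solnCoeff θ)).prod
          = ∑ q : Σ K : Composition m, ∀ i : Fin K.length, Composition (K.blocksFun i),
              ((-1 : ℚ) ^ q.1.length * ∏ i, cListQ (q.2 i).blocks)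
                • (List.ofFn fun i => (((q.2 i).blocks.map θ).prod)).prod := by
        rw [← Finset.univ_sigma_univ, Finset.sum_sigma]
        exact Finset.sum_congr rfl fun K _ => term K
      _ = _ := by
        refine (Fintype.sum_equiv (Composition.sigmaEquivSigmaPi m) _ _ fun p => ?_).symm
        obtain ⟨I, c⟩ := p
        show ((-1 : ℚ) ^ c.length * ((I.blocks.splitWrtComposition c).map cListQ).prod)
              • (I.blocks.map θ).prod
            = ((-1 : ℚ) ^ (I.gather c).length
                * ∏ i, cListQ ((I.sigmaCompositionAux c) i).blocks)
              • (List.ofFn fun i => (((I.sigmaCompositionAux c i).blocks.map θ).prod)).prod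
        have hlen : (I.gather c).length = c.length := Composition.length_gather I c
        have hS : (I.blocks.splitWrtComposition c).length = (I.gather c).length := by
          rw [List.length_splitWrtComposition, hlen]
        have e1 : (List.ofFn fun i : Fin (I.gather c).length =>
            cListQ ((I.sigmaCompositionAux c i).blocks))
            = (I.blocks.splitWrtComposition c).map cListQ :=
          ofFn_map_eq _ hS cListQ _ (fun k hk => rfl)
        have e2 : (List.ofFn fun i : Fin (I.gather c).length =>
            ((I.sigmaCompositionAux c i).blocks.map θ).prod)
            = (I.blocks.splitWrtComposition c).map (fun L => (L.map θ).prod) :=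
          ofFn_map_eq _ hS (fun L => (L.map θ).prod) _ (fun k hk => rfl)
        have e3 : ((I.blocks.splitWrtComposition c).map fun L => (L.map θ).prod).prod
            = (I.blocks.map θ).prod := by
          conv_rhs => rw [← List.flatten_splitWrtComposition I.blocks c]
          rw [List.map_flatten, List.prod_flatten, List.map_map]
          rfl
        rw [← List.prod_ofFn (f := fun i => cListQ ((I.sigmaCompositionAux c i).blocks)),
          e1, e2, e3, hlen]

def compAppend {a b m : ℕ} (h : a + b = m) (I' : Composition a) (J : Composition b) :
    Composition m :=
  ⟨I'.blocks ++ J.blocks,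
   fun hi => by
     rcases List.mem_append.mp hi with h' | h'
     exacts [I'.blocks_pos h', J.blocks_pos h'],
   by rw [List.sum_append, I'.blocks_sum, J.blocks_sum, h]⟩

def compAppendC {a b m : ℕ} (h : a + b = m) (I' : Composition a) (J : Composition b)
    (hb : 1 ≤ b) (c' : Composition I'.length) : Composition (compAppend h I' J).length :=
  ⟨c'.blocks ++ [J.length],
   fun hi => by
     rcases List.mem_append.mp hi with h' | h'
     · exact c'.blocks_pos h'
     · rw [List.mem_singleton] at h'
       subst h'
       exact comp_length_pos J hb,
   by
     rw [List.sum_append, c'.blocks_sum]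
     show Composition.length I' + (Composition.length J + 0) = (I'.blocks ++ J.blocks).length
     rw [List.length_append]
     rfl⟩

lemma split_compAppend {a b m : ℕ} (h : a + b = m) (I' : Composition a) (J : Composition b)
    (hb : 1 ≤ b) (c' : Composition I'.length) :
    (compAppend h I' J).blocks.splitWrtComposition (compAppendC h I' J hb c')
      = I'.blocks.splitWrtComposition c' ++ [J.blocks] :=
  splitAux_append c'.blocks I'.blocks J.blocks c'.blocks_sum

section Psi

variable {N : ℕ} (I : Composition N) (c : Composition I.length)

/-- the sum of the last block of the splitting -/
def psiN : ℕ := ((I.blocks.splitWrtComposition c).getLastD []).sum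

lemma psi_S_ne_nil (hN : 1 ≤ N) : I.blocks.splitWrtComposition c ≠ [] := by
  refine List.ne_nil_of_length_pos ?_
  rw [List.length_splitWrtComposition]
  exact comp_length_pos c (comp_length_pos I hN)

lemma psi_key (hS : I.blocks.splitWrtComposition c ≠ []) :
    ((I.blocks.splitWrtComposition c).dropLast.flatten).sum + psiN I c = N := by
  have h1 : (I.blocks.splitWrtComposition c).flatten = I.blocks :=
    List.flatten_splitWrtComposition I.blocks c
  rw [psiN, getLastD_of_ne_nil _ hS]
  conv_rhs => rw [← I.blocks_sum, ← h1]
  conv_rhs => rw [← List.dropLast_append_getLast hS]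
  rw [List.flatten_append, List.sum_append]
  simp

def psiJ (hS : I.blocks.splitWrtComposition c ≠ []) : Composition (psiN I c) :=
  ⟨(I.blocks.splitWrtComposition c).getLast hS,
   fun {x} hx => I.blocks_pos (by
     have hm : x ∈ (I.blocks.splitWrtComposition c).flatten :=
       List.mem_flatten.mpr ⟨_, List.getLast_mem hS, hx⟩
     rwa [List.flatten_splitWrtComposition] at hm),
   by rw [psiN, getLastD_of_ne_nil _ hS]⟩

def psiI' (hS : I.blocks.splitWrtComposition c ≠ []) : Composition (N - psiN I c) :=
  ⟨(I.blocks.splitWrtComposition c).dropLast.flatten,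
   fun {x} hx => I.blocks_pos (by
     obtain ⟨l, hl, hxl⟩ := List.mem_flatten.mp hx
     have hm : x ∈ (I.blocks.splitWrtComposition c).flatten :=
       List.mem_flatten.mpr ⟨l, List.dropLast_subset _ hl, hxl⟩
     rwa [List.flatten_splitWrtComposition] at hm),
   by
     have := psi_key I c hS
     omega⟩

def psiC' (hS : I.blocks.splitWrtComposition c ≠ []) : Composition (psiI' I c hS).length :=
  ⟨c.blocks.dropLast,
   fun hx => c.blocks_pos (List.dropLast_subset _ hx),
   by
     show (c.blocks.dropLast).sum = ((I.blocks.splitWrtComposition c).dropLast.flatten).length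
     rw [← List.map_length_splitWrtComposition I.blocks c, ← List.map_dropLast,
       List.length_flatten]⟩

end Psi

lemma sigmaIC_ext {N : ℕ} (p q : Σ I : Composition N, Composition I.length)
    (h1 : p.1.blocks = q.1.blocks) (h2 : p.2.blocks = q.2.blocks) : p = q := by
  obtain ⟨I1, c1⟩ := p
  obtain ⟨I2, c2⟩ := q
  dsimp at h1 h2
  have hI : I1 = I2 := by ext1; exact h1
  subst hI
  have hc : c1 = c2 := by ext1; exact h2
  subst hc
  rfl

lemma sigmaT_ext {N : ℕ}
    (p q : Σ n : ℕ, (Σ I' : Composition (N - n), Composition I'.length) × Composition n)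
    (h1 : p.1 = q.1) (h2 : p.2.1.1.blocks = q.2.1.1.blocks)
    (h3 : p.2.1.2.blocks = q.2.1.2.blocks) (h4 : p.2.2.blocks = q.2.2.blocks) : p = q := by
  obtain ⟨n, ⟨⟨I1, c1⟩, J1⟩⟩ := p
  obtain ⟨n', ⟨⟨I2, c2⟩, J2⟩⟩ := q
  dsimp at h1 h2 h3 h4
  subst h1
  have hI : I1 = I2 := by ext1; exact h2
  subst hI
  have hc : c1 = c2 := by ext1; exact h3
  subst hc
  have hJ : J1 = J2 := by ext1; exact h4
  subst hJ
  rfl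

/-- With `g = solnCoeff θ` and `h = invCoeff g`, for every `i ≥ 0` and `j ≥ 1`,
`Σ_{n=j}^{i+j} h_{i+j−n}·g_n = Σ_{I composition of i+j} C(I)·θ_I`, where
`C(I) = Σ_{I = I₁⁀⋯⁀I_m, |I_m| ≥ j} (−1)^{m+1} c(I₁)⋯c(I_m)`, the sum being over all ways
of writing `I` as a concatenation of nonempty compositions with the last block summing to
at least `j` (parameterized by compositions `c` of the length of `I`, via splitting the
block list of `I` along `c`). -/
theorem stmt16 {R : Type*} [Ring R] [Algebra ℚ R] (θ : ℕ → R) (i j : ℕ) (hj : 1 ≤ j) :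
    ∑ n ∈ Finset.Icc j (i + j), invCoeff (solnCoeff θ) (i + j - n) * solnCoeff θ n =
      ∑ I : Composition (i + j),
        (∑ c : Composition I.length,
            if j ≤ ((I.blocks.splitWrtComposition c).getLastD []).sum then
              (-1 : ℚ) ^ (c.length + 1) * ((I.blocks.splitWrtComposition c).map cListQ).prod
            else 0)
          • (I.blocks.map θ).prod := by
  classical
  set N := i + j with hNdef
  have hjN : 1 ≤ N := le_trans hj (Nat.le_add_left j i)
  have lhs_eq : ∑ n ∈ Finset.Icc j N, invCoeff (solnCoeff θ) (N - n) * solnCoeff θ n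
      = ∑ p ∈ (Finset.Icc j N).sigma
          (fun n => (Finset.univ : Finset ((Σ I' : Composition (N - n),
              Composition I'.length) × Composition n))),
          (((-1 : ℚ) ^ p.2.1.2.length
              * ((p.2.1.1.blocks.splitWrtComposition p.2.1.2).map cListQ).prod)
            * cListQ p.2.2.blocks)
            • (((p.2.1.1.blocks ++ p.2.2.blocks).map θ).prod) := by
    rw [Finset.sum_sigma]
    refine Finset.sum_congr rfl fun n hn => ?_
    obtain ⟨h1, h2⟩ := Finset.mem_Icc.mp hn
    have hn0 : n ≠ 0 := by omega
    rw [invCoeff_solnCoeff_eq, solnCoeff]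
    simp only [if_neg hn0]
    rw [Finset.sum_mul_sum, ← Fintype.sum_prod_type']
    refine Finset.sum_congr rfl fun x _ => ?_
    rw [smul_mul_smul_comm, List.map_append, List.prod_append]
  have rhs_eq : ∑ I : Composition N,
        (∑ c : Composition I.length,
            if j ≤ ((I.blocks.splitWrtComposition c).getLastD []).sum then
              (-1 : ℚ) ^ (c.length + 1) * ((I.blocks.splitWrtComposition c).map cListQ).prod
            else 0)
          • (I.blocks.map θ).prod
      = ∑ q ∈ Finset.univ.filter
          (fun q : Σ I : Composition N, Composition I.length =>
            j ≤ ((q.1.blocks.splitWrtComposition q.2).getLastD []).sum),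
          ((-1 : ℚ) ^ (q.2.length + 1)
              * ((q.1.blocks.splitWrtComposition q.2).map cListQ).prod)
            • ((q.1.blocks.map θ).prod) := by
    rw [Finset.sum_filter, ← Finset.univ_sigma_univ, Finset.sum_sigma]
    refine Finset.sum_congr rfl fun I _ => ?_
    rw [Finset.sum_smul]
    refine Finset.sum_congr rfl fun c _ => ?_
    rw [ite_smul, zero_smul]
  rw [lhs_eq, rhs_eq]
  have hmem : ∀ (p : Σ n : ℕ,
      (Σ I' : Composition (N - n), Composition I'.length) × Composition n),
      p ∈ (Finset.Icc j N).sigma (fun n => (Finset.univ : Finset ((Σ I' : Composition (N - n),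
          Composition I'.length) × Composition n))) → (N - p.1) + p.1 = N ∧ 1 ≤ p.1 := by
    intro p hp
    have h1 := (Finset.mem_sigma.mp hp).1
    rw [Finset.mem_Icc] at h1
    omega
  refine Finset.sum_bij'
    (fun p hp => ⟨compAppend (hmem p hp).1 p.2.1.1 p.2.2,
      compAppendC (hmem p hp).1 p.2.1.1 p.2.2 (hmem p hp).2 p.2.1.2⟩)
    (fun q _ => ⟨psiN q.1 q.2,
      ⟨⟨psiI' q.1 q.2 (psi_S_ne_nil q.1 q.2 hjN), psiC' q.1 q.2 (psi_S_ne_nil q.1 q.2 hjN)⟩,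
        psiJ q.1 q.2 (psi_S_ne_nil q.1 q.2 hjN)⟩⟩)
    ?_ ?_ ?_ ?_ ?_
  · -- maps into filter
    intro p hp
    rw [Finset.mem_filter]
    refine ⟨Finset.mem_univ _, ?_⟩
    rw [split_compAppend, List.getLastD_concat, p.2.2.blocks_sum]
    exact ((Finset.mem_Icc.mp (Finset.mem_sigma.mp hp).1)).1
  · -- maps into sigma
    intro q hq
    rw [Finset.mem_filter] at hq
    rw [Finset.mem_sigma]
    refine ⟨Finset.mem_Icc.mpr ⟨hq.2, ?_⟩, Finset.mem_univ _⟩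
    show psiN q.1 q.2 ≤ N
    have := psi_key q.1 q.2 (psi_S_ne_nil q.1 q.2 hjN)
    omega
  · -- left inverse
    intro p hp
    refine sigmaT_ext _ _ ?_ ?_ ?_ ?_
    · show psiN _ _ = p.1
      rw [psiN, split_compAppend, List.getLastD_concat]
      exact p.2.2.blocks_sum
    · show ((compAppend (hmem p hp).1 p.2.1.1 p.2.2).blocks.splitWrtComposition
          _).dropLast.flatten = p.2.1.1.blocks
      rw [split_compAppend, List.dropLast_concat]
      exact List.flatten_splitWrtComposition _ _
    · show ((compAppendC (hmem p hp).1 p.2.1.1 p.2.2 (hmem p hp).2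
          p.2.1.2).blocks).dropLast = p.2.1.2.blocks
      show (p.2.1.2.blocks ++ [p.2.2.length]).dropLast = p.2.1.2.blocks
      exact List.dropLast_concat
    · show ((compAppend (hmem p hp).1 p.2.1.1 p.2.2).blocks.splitWrtComposition
          _).getLast _ = p.2.2.blocks
      rw [← getLastD_of_ne_nil _ _ [], split_compAppend, List.getLastD_concat]
  · -- right inverse
    intro q hq
    have hS := psi_S_ne_nil q.1 q.2 hjN
    refine sigmaIC_ext _ _ ?_ ?_
    · show (q.1.blocks.splitWrtComposition q.2).dropLast.flatten
          ++ (q.1.blocks.splitWrtComposition q.2).getLast hS = q.1.blocks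
      have h5 : (q.1.blocks.splitWrtComposition q.2).dropLast.flatten
          ++ (q.1.blocks.splitWrtComposition q.2).getLast hS
          = ((q.1.blocks.splitWrtComposition q.2).dropLast
              ++ [(q.1.blocks.splitWrtComposition q.2).getLast hS]).flatten := by
        rw [List.flatten_append]
        simp
      rw [h5, List.dropLast_append_getLast hS]
      exact List.flatten_splitWrtComposition _ _
    · show q.2.blocks.dropLast ++ [((q.1.blocks.splitWrtComposition q.2).getLast hS).length]
          = q.2.blocks
      have hcb : q.2.blocks ≠ [] := by
        rw [← List.map_length_splitWrtComposition q.1.blocks q.2]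
        simpa using hS
      have h6 : ((q.1.blocks.splitWrtComposition q.2).getLast hS).length
          = q.2.blocks.getLast hcb := by
        have h7 := getLast_map' List.length (q.1.blocks.splitWrtComposition q.2) hS
        rw [← getLastD_of_ne_nil _ _ 0] at h7
        rw [List.map_length_splitWrtComposition] at h7
        rw [← h7, getLastD_of_ne_nil _ hcb 0]
      rw [h6, List.dropLast_append_getLast hcb]
  · -- values
    intro p hp
    have hsp := split_compAppend (hmem p hp).1 p.2.1.1 p.2.2 (hmem p hp).2 p.2.1.2
    show _ = (((-1 : ℚ) ^ ((compAppendC (hmem p hp).1 p.2.1.1 p.2.2 (hmem p hp).2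
          p.2.1.2).length + 1)) * _) • _
    rw [hsp]
    have hlen : (compAppendC (hmem p hp).1 p.2.1.1 p.2.2 (hmem p hp).2
        p.2.1.2).length = p.2.1.2.length + 1 := by
      show (p.2.1.2.blocks ++ [p.2.2.length]).length = _
      simp [Composition.length]
    rw [hlen]
    congr 1
    · rw [List.map_append, List.prod_append]
      simp only [List.map_cons, List.map_nil, List.prod_cons, List.prod_nil, mul_one]
      ring
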